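/- (Zeroth De Rham cohomology) Let M be a smooth manifold without boundary modelled on a finite-dimensional real normed vector space, and let f : M → ℝ be a smooth function. Then the differential of f vanishes at every point of M (i.e. mfderiv f x = 0 for all x ∈ M) if and only if f is constant on every connected component of M, i.e. f(y) = f(x) whenever y lies in the connected component of x. -/

import Mathlib

open Manifold

/-- Zeroth De Rham cohomology: on a smooth boundaryless manifold `M` modelled on a
finite-dimensional real normed space, a smooth function `f : M → ℝ` has vanishing
differential everywhere iff it is constant on every connected component of `M`. -/
theorem mfderiv_eq_zero_iff_constant_on_components
    {E : Type*} [NormedAddCommGroup E] [NormedSpace ℝ E] [FiniteDimensional ℝ E]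
    {M : Type*} [TopologicalSpace M] [ChartedSpace E M]
    [IsManifold (modelWithCornersSelf ℝ E) (⊤ : ℕ∞) M]
    (f : M → ℝ) (hf : ContMDiff (modelWithCornersSelf ℝ E) (modelWithCornersSelf ℝ ℝ) (⊤ : ℕ∞) f) :
    (∀ x : M, mfderiv (modelWithCornersSelf ℝ E) (modelWithCornersSelf ℝ ℝ) f x = 0) ↔
      ∀ x y : M, y ∈ connectedComponent x → f y = f x := by
  set I := modelWithCornersSelf ℝ E
  haveI : LocallyConnectedSpace M := ChartedSpace.locallyConnectedSpace E M
  constructor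
  · intro h
    -- f is locally constant
    have hloc : IsLocallyConstant f := by
      rw [IsLocallyConstant.iff_eventually_eq]
      intro x
      -- work in the extended chart at x
      obtain ⟨ε, hε, hball⟩ := Metric.isOpen_iff.mp (isOpen_extChartAt_target x)
        (extChartAt I x x) (mem_extChartAt_target x)
      set B := Metric.ball (extChartAt I x x) ε
      set g : E → ℝ := f ∘ (extChartAt I x).symm
      have hg : ∀ y ∈ B, HasFDerivWithinAt g (0 : E →L[ℝ] ℝ) B y := by
        intro y hy
        have hsymm : MDifferentiableWithinAt 𝓘(ℝ, E) I (extChartAt I x).symm B y :=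
          ((mdifferentiableOn_extChartAt_symm (x := x)).mono hball) y hy
        have hfd : HasMFDerivAt I 𝓘(ℝ, ℝ) f ((extChartAt I x).symm y) 0 := by
          have := (hf ((extChartAt I x).symm y)).mdifferentiableAt (by simp) |>.hasMFDerivAt
          rwa [h ((extChartAt I x).symm y)] at this
        have hcomp := hfd.comp_hasMFDerivWithinAt y hsymm.hasMFDerivWithinAt
        rw [ContinuousLinearMap.zero_comp] at hcomp
        exact hasMFDerivWithinAt_iff_hasFDerivWithinAt.mp hcomp
      have hconst : ∀ y ∈ B, g y = g (extChartAt I x x) :=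
        fun y hy => (convex_ball _ _).is_const_of_fderivWithin_eq_zero
          (fun z hz => (hg z hz).differentiableWithinAt)
          (fun z hz => (hg z hz).fderivWithin (Metric.isOpen_ball.uniqueDiffWithinAt hz))
          hy (Metric.mem_ball_self hε)
      have hmem : (extChartAt I x).source ∩ (extChartAt I x) ⁻¹' B ∈ nhds x := by
        apply Filter.inter_mem (extChartAt_source_mem_nhds x)
        exact (continuousAt_extChartAt x).preimage_mem_nhds (Metric.ball_mem_nhds _ hε)
      filter_upwards [hmem] with p ⟨hp₁, hp₂⟩
      have : f p = g (extChartAt I x p) := by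
        simp only [g, Function.comp_apply, (extChartAt I x).left_inv hp₁]
      rw [this, hconst _ hp₂]
      simp [g, (extChartAt I x).left_inv (mem_extChartAt_source x)]
    intro x y hy
    exact hloc.apply_eq_of_isPreconnected isPreconnected_connectedComponent hy
      mem_connectedComponent
  · intro h x
    have hev : f =ᶠ[nhds x] fun _ => f x := by
      filter_upwards [isOpen_connectedComponent.mem_nhds
        (mem_connectedComponent : x ∈ connectedComponent x)] with p hp
      exact h x p hp
    rw [hev.mfderiv_eq, mfderiv_const]
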